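/- arXiv:1202.0427 — 2 statements merged into one kernel-verified Lean document; each statement's English description precedes it below -/
import Mathlib

section
/- A ring R is right coherent if and only if the intersection of any two finitely generated right ideals of R is finitely generated and the right annihilator of every element of R is finitely generated. -/
open MulOpposite

/-- A ring `R` is right coherent if every finitely generated right ideal
(formalized as an ideal of `Rᵐᵒᵖ`) is finitely presented as a right `R`-module
(i.e. as an `Rᵐᵒᵖ`-module). -/
def RightCoherent (R : Type) [Ring R] : Prop :=
  ∀ I : Ideal Rᵐᵒᵖ, I.FG → Module.FinitePresentation Rᵐᵒᵖ I

/-- The right annihilator `{r : R | s * r = 0}` of `s ∈ R`, viewed as a right ideal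
of `R`, i.e. as an ideal of `Rᵐᵒᵖ`. -/
def rightAnnihilator (R : Type) [Ring R] (s : R) : Ideal Rᵐᵒᵖ where
  carrier := {x | x * op s = 0}
  add_mem' := by
    intro a b ha hb
    simp only [Set.mem_setOf_eq] at *
    rw [add_mul, ha, hb, add_zero]
  zero_mem' := by simp
  smul_mem' := by
    intro c x hx
    simp only [Set.mem_setOf_eq, smul_eq_mul] at *
    rw [mul_assoc, hx, mul_zero]

section Aux

variable {R : Type*} [Ring R] {M N : Type*} [AddCommGroup M] [Module R M]
  [AddCommGroup N] [Module R N]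

lemma MyAux.fp_of_equiv (e : M ≃ₗ[R] N) [Module.FinitePresentation R M] :
    Module.FinitePresentation R N :=
  Module.finitePresentation_of_surjective e.toLinearMap e.surjective
    (by rw [LinearMap.ker_eq_bot.mpr e.injective]; exact Submodule.fg_bot)

lemma MyAux.fp_prod [Module.FinitePresentation R M] [Module.FinitePresentation R N] :
    Module.FinitePresentation R (M × N) := by
  have : Module.FinitePresentation R ↥(LinearMap.ker (LinearMap.snd R M N)) := by
    refine MyAux.fp_of_equiv (LinearEquiv.ofBijective
      (LinearMap.codRestrict _ (LinearMap.inl R M N)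
        (fun x => by simp [LinearMap.mem_ker])) ⟨?_, ?_⟩)
    · intro a b h
      exact congrArg Prod.fst (congrArg Subtype.val h)
    · rintro ⟨⟨a, b⟩, hb⟩
      simp only [LinearMap.mem_ker, LinearMap.snd_apply] at hb
      exact ⟨a, by subst hb; rfl⟩
  exact Module.finitePresentation_of_ker (LinearMap.snd R M N) (fun y => ⟨(0, y), rfl⟩)

variable {S : Type*} [Ring S]

/-- The map `I × J → I ⊔ J`, `(a, b) ↦ a - b`. -/
noncomputable def MyAux.addSub (I J : Ideal S) : (↥I × ↥J) →ₗ[S] ↥(I ⊔ J) :=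
  LinearMap.codRestrict (I ⊔ J)
    (I.subtype ∘ₗ LinearMap.fst S I J - J.subtype ∘ₗ LinearMap.snd S I J)
    (fun p => sub_mem (Submodule.mem_sup_left p.1.2) (Submodule.mem_sup_right p.2.2))

lemma MyAux.addSub_apply (I J : Ideal S) (p : ↥I × ↥J) :
    (MyAux.addSub I J p : S) = (p.1 : S) - (p.2 : S) := rfl

lemma MyAux.addSub_surj (I J : Ideal S) : Function.Surjective (MyAux.addSub I J) := by
  rintro ⟨y, hy⟩
  obtain ⟨a, ha, b, hb, rfl⟩ := Submodule.mem_sup.mp hy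
  refine ⟨(⟨a, ha⟩, ⟨-b, neg_mem hb⟩), ?_⟩
  apply Subtype.ext
  simp [MyAux.addSub_apply]

lemma MyAux.mem_ker_addSub {I J : Ideal S} {p : ↥I × ↥J} :
    p ∈ LinearMap.ker (MyAux.addSub I J) ↔ (p.1 : S) = (p.2 : S) := by
  rw [LinearMap.mem_ker, Subtype.ext_iff, MyAux.addSub_apply]
  rw [show ((0 : ↥(I ⊔ J)) : S) = 0 from rfl, sub_eq_zero]

lemma MyAux.inf_eq_map_ker (I J : Ideal S) :
    (I ⊓ J) = Submodule.map (I.subtype ∘ₗ LinearMap.fst S I J)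
      (LinearMap.ker (MyAux.addSub I J)) := by
  ext x
  simp only [Submodule.mem_inf, Submodule.mem_map]
  constructor
  · rintro ⟨h1, h2⟩
    exact ⟨(⟨x, h1⟩, ⟨x, h2⟩), MyAux.mem_ker_addSub.mpr rfl, rfl⟩
  · rintro ⟨p, hp, rfl⟩
    have h : (p.1 : S) = (p.2 : S) := MyAux.mem_ker_addSub.mp hp
    exact ⟨p.1.2, show (p.1 : S) ∈ J by rw [h]; exact p.2.2⟩

lemma MyAux.ker_addSub_eq_range (I J : Ideal S) :
    LinearMap.ker (MyAux.addSub I J) =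
      LinearMap.range ((Submodule.inclusion (inf_le_left : I ⊓ J ≤ I)).prod
        (Submodule.inclusion (inf_le_right : I ⊓ J ≤ J))) := by
  ext p
  rw [MyAux.mem_ker_addSub]
  constructor
  · intro h
    refine ⟨⟨(p.1 : S), ⟨p.1.2, h ▸ p.2.2⟩⟩, ?_⟩
    refine Prod.ext (Subtype.ext rfl) (Subtype.ext ?_)
    simpa [Submodule.coe_inclusion] using h
  · rintro ⟨y, rfl⟩
    rfl

lemma MyAux.fg_inf_of_fg_ker {I J : Ideal S} (h : (LinearMap.ker (MyAux.addSub I J)).FG) :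
    (I ⊓ J).FG := by
  rw [MyAux.inf_eq_map_ker]
  exact h.map _

lemma MyAux.fg_ker_of_fg_inf {I J : Ideal S} (h : (I ⊓ J).FG) :
    (LinearMap.ker (MyAux.addSub I J)).FG := by
  rw [MyAux.ker_addSub_eq_range, ← Submodule.map_top]
  exact ((Submodule.fg_top _).mpr h).map _

end Aux

lemma MyAux.ker_toSpan {R : Type} [Ring R] (s : R) :
    LinearMap.ker (LinearMap.toSpanSingleton Rᵐᵒᵖ Rᵐᵒᵖ (op s)) = rightAnnihilator R s := by
  ext x
  show x • op s = 0 ↔ x ∈ rightAnnihilator R s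
  rw [smul_eq_mul]
  rfl

lemma MyAux.fp_span_singleton {R : Type} [Ring R] (s : R)
    (h : (rightAnnihilator R s).FG) :
    Module.FinitePresentation Rᵐᵒᵖ ↥(Ideal.span {op s} : Ideal Rᵐᵒᵖ) := by
  refine Module.finitePresentation_of_surjective
    (LinearMap.codRestrict _ (LinearMap.toSpanSingleton Rᵐᵒᵖ Rᵐᵒᵖ (op s))
      (fun r => Submodule.smul_mem _ _ (Ideal.subset_span rfl))) ?_ ?_
  · rintro ⟨y, hy⟩
    obtain ⟨a, ha⟩ := Submodule.mem_span_singleton.mp hy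
    exact ⟨a, Subtype.ext ha⟩
  · exact (congrArg Submodule.FG
      ((LinearMap.ker_codRestrict _ _ _).trans (MyAux.ker_toSpan s))).mpr h

/-- A ring `R` is right coherent iff the intersection of any two finitely generated
right ideals is finitely generated and the right annihilator of every element of `R`
is finitely generated. -/
theorem rightCoherent_iff_inf_fg_and_ann_fg (R : Type) [Ring R] :
    RightCoherent R ↔
      ((∀ I J : Ideal Rᵐᵒᵖ, I.FG → J.FG → (I ⊓ J).FG) ∧
        (∀ s : R, (rightAnnihilator R s).FG)) := by
  constructor
  · intro h
    constructor
    · intro I J hI hJ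
      haveI : Module.Finite Rᵐᵒᵖ ↥I := Module.Finite.iff_fg.mpr hI
      haveI : Module.Finite Rᵐᵒᵖ ↥J := Module.Finite.iff_fg.mpr hJ
      haveI := h _ (Submodule.FG.sup hI hJ)
      exact MyAux.fg_inf_of_fg_ker
        (Module.FinitePresentation.fg_ker _ (MyAux.addSub_surj I J))
    · intro s
      haveI := h (Ideal.span {op s}) ⟨{op s}, by simp⟩
      rw [← MyAux.ker_toSpan]
      have : LinearMap.ker (LinearMap.toSpanSingleton Rᵐᵒᵖ Rᵐᵒᵖ (op s)) =
          LinearMap.ker (LinearMap.codRestrict (Ideal.span {op s})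
            (LinearMap.toSpanSingleton Rᵐᵒᵖ Rᵐᵒᵖ (op s))
            (fun r => Submodule.smul_mem _ _ (Ideal.subset_span rfl))) :=
        (LinearMap.ker_codRestrict _ _ _).symm
      rw [this]
      refine Module.FinitePresentation.fg_ker _ ?_
      rintro ⟨y, hy⟩
      obtain ⟨a, ha⟩ := Submodule.mem_span_singleton.mp hy
      exact ⟨a, Subtype.ext ha⟩
  · rintro ⟨hinf, hann⟩ I hI
    obtain ⟨t, ht⟩ := hI
    have key : ∀ t : Finset Rᵐᵒᵖ,
        Module.FinitePresentation Rᵐᵒᵖ ↥(Ideal.span (t : Set Rᵐᵒᵖ)) := by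
      classical
      intro t
      induction t using Finset.induction_on with
      | empty =>
        rw [Finset.coe_empty, Ideal.span_empty]
        refine Module.finitePresentation_of_surjective (0 : Rᵐᵒᵖ →ₗ[Rᵐᵒᵖ] ↥(⊥ : Ideal Rᵐᵒᵖ))
          (fun y => ⟨0, Subsingleton.elim _ _⟩) ?_
        rw [LinearMap.ker_zero]
        exact Module.Finite.fg_top
      | @insert x t hx ih =>
        rw [Finset.coe_insert, Ideal.span_insert]
        haveI hP : Module.FinitePresentation Rᵐᵒᵖ
            ↥(Ideal.span {x} : Ideal Rᵐᵒᵖ) := by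
          have := MyAux.fp_span_singleton (unop x) (hann (unop x))
          rwa [op_unop] at this
        haveI := ih
        haveI := MyAux.fp_prod (R := Rᵐᵒᵖ)
          (M := ↥(Ideal.span ({x} : Set Rᵐᵒᵖ)))
          (N := ↥(Ideal.span ((t : Set Rᵐᵒᵖ))))
        have hPJ : ((Ideal.span ({x} : Set Rᵐᵒᵖ)) ⊓ (Ideal.span ((t : Set Rᵐᵒᵖ)))).FG :=
          hinf _ _ ⟨{x}, by simp⟩ ⟨t, rfl⟩
        exact Module.finitePresentation_of_surjective
          (MyAux.addSub (Ideal.span ({x} : Set Rᵐᵒᵖ)) (Ideal.span ((t : Set Rᵐᵒᵖ))))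
          (MyAux.addSub_surj _ _) (MyAux.fg_ker_of_fg_inf hPJ)
    rw [← ht]
    exact key t
end

section
/- A module M is absolutely pure if and only if Ext¹_R(F, M) = 0 for every finitely presented right R-module F. -/
open TensorProduct MulOpposite

noncomputable section

/-- The tensor product `M ⊗_R N` of a right `R`-module `M` and a left `R`-module `N`,
constructed as a quotient of `M ⊗_ℤ N` by the balancing relations. -/
def BalancedRel (R : Type) [Ring R] (M N : Type) [AddCommGroup M] [Module Rᵐᵒᵖ M]
    [AddCommGroup N] [Module R N] : Submodule ℤ (M ⊗[ℤ] N) :=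
  Submodule.span ℤ {x | ∃ (m : M) (r : R) (n : N),
    x = (op r • m) ⊗ₜ[ℤ] n - m ⊗ₜ[ℤ] (r • n)}

def RTensor (R : Type) [Ring R] (M N : Type) [AddCommGroup M] [Module Rᵐᵒᵖ M]
    [AddCommGroup N] [Module R N] : Type :=
  M ⊗[ℤ] N ⧸ BalancedRel R M N

instance (R : Type) [Ring R] (M N : Type) [AddCommGroup M] [Module Rᵐᵒᵖ M]
    [AddCommGroup N] [Module R N] : AddCommGroup (RTensor R M N) :=
  inferInstanceAs (AddCommGroup (M ⊗[ℤ] N ⧸ BalancedRel R M N))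

/-- `m ⊗ n` as an element of `RTensor R M N`. -/
def rtmk (R : Type) [Ring R] {M N : Type} [AddCommGroup M] [Module Rᵐᵒᵖ M]
    [AddCommGroup N] [Module R N] (m : M) (n : N) : RTensor R M N :=
  Submodule.Quotient.mk (m ⊗ₜ[ℤ] n)

/-- The map `M ⊗_R N → M ⊗_R N'` induced by a map `f : N → N'` of left modules. -/
def lTensorMap (R : Type) [Ring R] {M N N' : Type} [AddCommGroup M] [Module Rᵐᵒᵖ M]
    [AddCommGroup N] [Module R N] [AddCommGroup N'] [Module R N']
    (f : N →ₗ[R] N') : RTensor R M N →ₗ[ℤ] RTensor R M N' :=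
  Submodule.mapQ _ _ (LinearMap.lTensor M (f.restrictScalars ℤ)) (by
    rw [BalancedRel, Submodule.span_le]
    rintro x ⟨m, r, n, rfl⟩
    refine Submodule.subset_span ⟨m, r, f n, ?_⟩
    exact (map_sub (LinearMap.lTensor M (f.restrictScalars ℤ)) _ _).trans (by simp))

/-- The map `M ⊗_R N → M' ⊗_R N` induced by a map `g : M → M'` of right modules. -/
def rTensorMap (R : Type) [Ring R] {M M' N : Type} [AddCommGroup M] [Module Rᵐᵒᵖ M]
    [AddCommGroup M'] [Module Rᵐᵒᵖ M'] [AddCommGroup N] [Module R N]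
    (g : M →ₗ[Rᵐᵒᵖ] M') : RTensor R M N →ₗ[ℤ] RTensor R M' N :=
  Submodule.mapQ _ _ (LinearMap.rTensor N (g.restrictScalars ℤ)) (by
    rw [BalancedRel, Submodule.span_le]
    rintro x ⟨m, r, n, rfl⟩
    refine Submodule.subset_span ⟨g m, r, n, ?_⟩
    exact (map_sub (LinearMap.rTensor N (g.restrictScalars ℤ)) _ _).trans (by simp))

/-- A right `R`-module `M` is flat if tensoring with it preserves injectivity of
maps of left `R`-modules. -/
def IsFlatRight (R : Type) [Ring R] (M : Type) [AddCommGroup M] [Module Rᵐᵒᵖ M] : Prop :=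
  ∀ (A B : Type) [AddCommGroup A] [Module R A] [AddCommGroup B] [Module R B]
    (f : A →ₗ[R] B), Function.Injective f →
      Function.Injective (lTensorMap R (M := M) f)

/-- A map of right `R`-modules is pure if tensoring with any left module preserves
its injectivity. -/
def IsPure (R : Type) [Ring R] {M N : Type} [AddCommGroup M] [Module Rᵐᵒᵖ M]
    [AddCommGroup N] [Module Rᵐᵒᵖ N] (j : M →ₗ[Rᵐᵒᵖ] N) : Prop :=
  ∀ (L : Type) [AddCommGroup L] [Module R L],
    Function.Injective (rTensorMap R (N := L) j)

/-- A right `R`-module `M` is absolutely pure if every monomorphism with domain `M`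
is a pure monomorphism. -/
def AbsolutelyPure (R : Type) [Ring R] (M : Type) [AddCommGroup M] [Module Rᵐᵒᵖ M] : Prop :=
  ∀ (N : Type) [AddCommGroup N] [Module Rᵐᵒᵖ N] (j : M →ₗ[Rᵐᵒᵖ] N),
    Function.Injective j → IsPure R j


/-! ### Basic API for `RTensor` -/

section RTensorBasics

variable {R : Type} [Ring R] {M N : Type} [AddCommGroup M] [Module Rᵐᵒᵖ M]
  [AddCommGroup N] [Module R N]

lemma rtmk_add_left (m m' : M) (n : N) :
    rtmk R (m + m') n = rtmk R m n + rtmk R m' n := by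
  simp [rtmk, TensorProduct.add_tmul, ← map_add]
  rfl

lemma rtmk_add_right (m : M) (n n' : N) :
    rtmk R m (n + n') = rtmk R m n + rtmk R m n' := by
  simp [rtmk, TensorProduct.tmul_add, ← map_add]
  rfl

lemma rtmk_zero_left (n : N) : rtmk R (0 : M) n = 0 := by
  simp [rtmk, TensorProduct.zero_tmul]
  rfl

lemma rtmk_zero_right (m : M) : rtmk R m (0 : N) = 0 := by
  simp [rtmk, TensorProduct.tmul_zero]
  rfl

lemma rtmk_neg_left (m : M) (n : N) : rtmk R (-m) n = - rtmk R m n := by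
  simp [rtmk, TensorProduct.neg_tmul, ← map_neg]
  rfl

lemma rtmk_smul (r : R) (m : M) (n : N) :
    rtmk R (op r • m) n = rtmk R m (r • n) := by
  rw [rtmk, rtmk]; refine (Submodule.Quotient.eq (BalancedRel R M N)).2 ?_
  exact Submodule.subset_span ⟨m, r, n, rfl⟩

/-- `rtmk` as an additive monoid hom in the first argument. -/
def rtmkLeftHom (n : N) : M →+ RTensor R M N :=
  AddMonoidHom.mk' (fun m => rtmk R m n) (fun m m' => rtmk_add_left m m' n)

/-- `rtmk` as an additive monoid hom in the second argument. -/
def rtmkRightHom (m : M) : N →+ RTensor R M N :=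
  AddMonoidHom.mk' (fun n => rtmk R m n) (fun n n' => rtmk_add_right m n n')

@[simp] lemma rtmkLeftHom_apply (n : N) (m : M) : rtmkLeftHom (R := R) n m = rtmk R m n := rfl
@[simp] lemma rtmkRightHom_apply (m : M) (n : N) : rtmkRightHom (R := R) m n = rtmk R m n := rfl

variable {A : Type} [AddCommGroup A]

/-- Lift a balanced biadditive map to `RTensor`. -/
def rtLift (b : M →+ N →+ A) (hb : ∀ (r : R) (m : M) (n : N), b (op r • m) n = b m (r • n)) :
    RTensor R M N →ₗ[ℤ] A :=
  Submodule.liftQ _ (TensorProduct.lift (LinearMap.mk₂ ℤ (fun m n => b m n)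
    (fun m m' n => by simp) (fun z m n => by simp [map_zsmul])
    (fun m n n' => by simp) (fun z m n => by simp [map_zsmul])))
    (by
      rw [BalancedRel, Submodule.span_le]
      rintro x ⟨m, r, n, rfl⟩
      show TensorProduct.lift _ ((op r • m) ⊗ₜ[ℤ] n - m ⊗ₜ[ℤ] (r • n)) = 0
      simp [hb r m n])

lemma rtLift_rtmk (b : M →+ N →+ A)
    (hb : ∀ (r : R) (m : M) (n : N), b (op r • m) n = b m (r • n)) (m : M) (n : N) :
    rtLift b hb (rtmk R m n) = b m n := by
  rfl

lemma rtensor_exists_list (x : RTensor R M N) :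
    ∃ l : List (M × N), x = (l.map (fun p => rtmk R p.1 p.2)).sum := by
  obtain ⟨t, rfl⟩ := Submodule.Quotient.mk_surjective _ x
  induction t with
  | zero => exact ⟨[], by simp; rfl⟩
  | tmul m n => exact ⟨[(m, n)], by rw [List.map_singleton, List.sum_singleton]; rfl⟩
  | add s t hs ht =>
      obtain ⟨ls, hls⟩ := hs
      obtain ⟨lt, hlt⟩ := ht
      refine ⟨ls ++ lt, ?_⟩
      have : (Submodule.Quotient.mk (s + t) : RTensor R M N) =
          Submodule.Quotient.mk s + Submodule.Quotient.mk t := rfl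
      simp [this, hls, hlt]
      rfl

lemma rTensorMap_rtmk {M' : Type} [AddCommGroup M'] [Module Rᵐᵒᵖ M']
    (g : M →ₗ[Rᵐᵒᵖ] M') (m : M) (n : N) :
    rTensorMap R g (rtmk R m n) = rtmk R (g m) n := by
  rfl

lemma lTensorMap_rtmk {N' : Type} [AddCommGroup N'] [Module R N']
    (f : N →ₗ[R] N') (m : M) (n : N) :
    lTensorMap R (M := M) f (rtmk R m n) = rtmk R m (f n) := by
  rfl

end RTensorBasics

/-! ### The kernel description of `RTensor` along a free presentation -/

section KeyLemma

variable {R : Type} [Ring R] {M : Type} [AddCommGroup M] [Module Rᵐᵒᵖ M]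
  {ι : Type} {L : Type} [AddCommGroup L] [Module R L]

/-- `smash y w` is the finitely supported family `i ↦ op (w i) • y`. -/
def smash (y : M) (w : ι →₀ R) : ι →₀ M :=
  w.mapRange (fun r => op r • y) (by simp)

@[simp] lemma smash_apply (y : M) (w : ι →₀ R) (i : ι) :
    smash y w i = op (w i) • y := Finsupp.mapRange_apply ..

lemma smash_add_right (y : M) (w w' : ι →₀ R) :
    smash y (w + w') = smash y w + smash y w' := by
  ext i; simp [add_smul]

lemma smash_sub_right (y : M) (w w' : ι →₀ R) :
    smash y (w - w') = smash y w - smash y w' := by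
  ext i; simp [sub_smul]

lemma smash_add_left (y y' : M) (w : ι →₀ R) :
    smash (y + y') w = smash y w + smash y' w := by
  ext i; simp [smul_add]

lemma smash_neg_left (y : M) (w : ι →₀ R) : smash (-y) w = - smash y w := by
  ext i; simp

lemma smash_smul (r : R) (y : M) (w : ι →₀ R) :
    smash (op r • y) w = smash y (r • w) := by
  ext i; simp [mul_smul, op_mul]

lemma smash_single_one (y : M) (i : ι) : smash y (Finsupp.single i (1 : R)) = Finsupp.single i y := by
  ext j
  rw [smash_apply]
  rcases eq_or_ne i j with rfl | h
  · simp
  · simp [Finsupp.single_eq_of_ne' h]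

/-- The additive map `(ι →₀ M) → M ⊗_R L` sending `u` to `∑ᵢ uᵢ ⊗ q(δᵢ)`. -/
def PhiMap (q : (ι →₀ R) →ₗ[R] L) : (ι →₀ M) →+ RTensor R M L :=
  Finsupp.liftAddHom (fun i => rtmkLeftHom (q (Finsupp.single i 1)))

lemma PhiMap_single (q : (ι →₀ R) →ₗ[R] L) (i : ι) (m : M) :
    PhiMap (M := M) q (Finsupp.single i m) = rtmk R m (q (Finsupp.single i 1)) := by
  rw [PhiMap, Finsupp.liftAddHom_apply_single]
  rfl

lemma PhiMap_apply (q : (ι →₀ R) →ₗ[R] L) (u : ι →₀ M) :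
    PhiMap q u = u.sum (fun i m => rtmk R m (q (Finsupp.single i 1))) := by
  simp [PhiMap, Finsupp.liftAddHom_apply, Finsupp.sum]

/-- The subgroup of "trivial relations". -/
def Wsub (q : (ι →₀ R) →ₗ[R] L) : AddSubgroup (ι →₀ M) :=
  AddSubgroup.closure {u | ∃ (y : M) (w : ι →₀ R), q w = 0 ∧ u = smash y w}

lemma PhiMap_smash (q : (ι →₀ R) →ₗ[R] L) (y : M) (w : ι →₀ R) (hw : q w = 0) :
    PhiMap q (smash y w) = 0 := by
  rw [PhiMap_apply, smash, Finsupp.sum_mapRange_index (by simp [rtmk_zero_left])]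
  have : (w.sum fun i r => rtmk R (op r • y) (q (Finsupp.single i 1)))
      = w.sum fun i r => rtmkRightHom (R := R) y (q (Finsupp.single i r)) := by
    refine Finsupp.sum_congr (fun i _ => ?_)
    rw [rtmk_smul, rtmkRightHom_apply]
    congr 1
    rw [← map_smul]
    congr 1
    rw [Finsupp.smul_single, smul_eq_mul, mul_one]
  rw [this]
  have h2 : (w.sum fun i r => rtmkRightHom (R := R) y (q (Finsupp.single i r)))
      = rtmkRightHom (R := R) y (q (w.sum fun i r => Finsupp.single i r)) := by
    rw [Finsupp.sum, Finsupp.sum, map_sum, map_sum]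
  rw [h2, Finsupp.sum_single w, hw, rtmkRightHom_apply, rtmk_zero_right]

lemma PhiMap_mem_Wsub (q : (ι →₀ R) →ₗ[R] L) (u : ι →₀ M) (hu : u ∈ Wsub (M := M) q) :
    PhiMap q u = 0 := by
  induction hu using AddSubgroup.closure_induction with
  | mem a ha => obtain ⟨y, w, hw, rfl⟩ := ha; exact PhiMap_smash q y w hw
  | zero => exact map_zero _
  | add a b _ _ ha hb => rw [map_add, ha, hb, add_zero]
  | neg a _ ha => rw [map_neg, ha, neg_zero]

/-- Key lemma: if `∑ uᵢ ⊗ q(δᵢ) = 0` in `M ⊗_R L` then `u` is a sum of trivial relations. -/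
lemma mem_Wsub_of_PhiMap_eq_zero (q : (ι →₀ R) →ₗ[R] L) (hq : Function.Surjective q)
    (u : ι →₀ M) (hu : PhiMap q u = 0) : u ∈ Wsub (M := M) q := by
  classical
  set W := Wsub (M := M) q
  -- the quotient by `W`
  let A := (ι →₀ M) ⧸ W
  let mk : (ι →₀ M) →+ A := QuotientAddGroup.mk' W
  have key : ∀ (m : M) (w w' : ι →₀ R), q w = q w' → mk (smash m w) = mk (smash m w') := by
    intro m w w' h
    rw [← sub_eq_zero, ← map_sub, ← smash_sub_right]
    exact (QuotientAddGroup.eq_zero_iff _).2 <| AddSubgroup.subset_closure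
      ⟨m, w - w', by rw [map_sub, h, sub_self], rfl⟩
  let sec : L → (ι →₀ R) := Function.surjInv hq
  have hsec : ∀ l, q (sec l) = l := Function.surjInv_eq hq
  -- the balanced biadditive map
  let b : M →+ L →+ A := AddMonoidHom.mk'
    (fun m => AddMonoidHom.mk' (fun l => mk (smash m (sec l)))
      (fun l l' => by
        show mk (smash m (sec (l + l'))) = mk (smash m (sec l)) + mk (smash m (sec l'))
        rw [key m (sec (l + l')) (sec l + sec l') (by simp [hsec]), smash_add_right, map_add]))
    (fun m m' => by
      ext l
      simp only [AddMonoidHom.mk'_apply, AddMonoidHom.add_apply]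
      rw [smash_add_left, map_add])
  have hb : ∀ (r : R) (m : M) (l : L), b (op r • m) l = b m (r • l) := by
    intro r m l
    show mk (smash (op r • m) (sec l)) = mk (smash m (sec (r • l)))
    rw [smash_smul, key m (r • sec l) (sec (r • l)) (by simp [hsec])]
  let Ψ : RTensor R M L →ₗ[ℤ] A := rtLift b hb
  have hΨ : ∀ v : ι →₀ M, Ψ (PhiMap q v) = mk v := by
    intro v
    rw [PhiMap_apply, map_finsuppSum]
    have : ∀ i m, Ψ (rtmk R m (q (Finsupp.single i 1))) = mk (Finsupp.single i m) := by
      intro i m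
      rw [rtLift_rtmk]
      show mk (smash m (sec (q (Finsupp.single i 1)))) = _
      rw [key m (sec (q (Finsupp.single i 1))) (Finsupp.single i 1) (by simp [hsec]),
        smash_single_one]
    have h3 : (v.sum fun a c => Ψ (rtmk R c (q (Finsupp.single a 1))))
        = v.sum fun a c => mk (Finsupp.single a c) :=
      Finsupp.sum_congr (fun i _ => this i (v i))
    rw [h3, Finsupp.sum, ← map_sum mk]
    congr 1
    exact Finsupp.sum_single v
  have := hΨ u
  rw [hu, map_zero] at this
  exact (QuotientAddGroup.eq_zero_iff _).1 this.symm
end KeyLemma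

/-! ### FP-injectivity and purity -/

section Purity

variable {R : Type} [Ring R] {M : Type} [AddCommGroup M] [Module Rᵐᵒᵖ M]

/-- The linear map `(Fin k → Rᵐᵒᵖ) → V` determined by a family of vectors. -/
def piMap {k : ℕ} {V : Type} [AddCommGroup V] [Module Rᵐᵒᵖ V] (v : Fin k → V) :
    (Fin k → Rᵐᵒᵖ) →ₗ[Rᵐᵒᵖ] V where
  toFun f := ∑ s, f s • v s
  map_add' f g := by simp [add_smul, Finset.sum_add_distrib]
  map_smul' c f := by simp [mul_smul, Finset.smul_sum]

lemma piMap_apply {k : ℕ} {V : Type} [AddCommGroup V] [Module Rᵐᵒᵖ V] (v : Fin k → V)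
    (f : Fin k → Rᵐᵒᵖ) : piMap v f = ∑ s, f s • v s := rfl

lemma piMap_single {k : ℕ} {V : Type} [AddCommGroup V] [Module Rᵐᵒᵖ V] (v : Fin k → V)
    (s : Fin k) : piMap v (Pi.single s (1 : Rᵐᵒᵖ)) = v s := by
  rw [piMap_apply]
  rw [Finset.sum_eq_single s (fun t _ ht => by simp [Pi.single_apply, ht]) (by simp)]
  simp

lemma range_piMap {k : ℕ} {V : Type} [AddCommGroup V] [Module Rᵐᵒᵖ V] (v : Fin k → V) :
    LinearMap.range (piMap v) = Submodule.span Rᵐᵒᵖ (Set.range v) := by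
  apply le_antisymm
  · rintro x ⟨f, rfl⟩
    rw [piMap_apply]
    exact Submodule.sum_mem _ fun s _ =>
      Submodule.smul_mem _ _ (Submodule.subset_span (Set.mem_range_self s))
  · rw [Submodule.span_le]
    rintro x ⟨s, rfl⟩
    exact ⟨Pi.single s 1, piMap_single v s⟩

/-- `M` is FP-injective: maps from finitely generated submodules of finite free modules
into `M` extend to the whole free module. -/
def FPInj (R : Type) [Ring R] (M : Type) [AddCommGroup M] [Module Rᵐᵒᵖ M] : Prop :=
  ∀ (n : ℕ) (K : Submodule Rᵐᵒᵖ (Fin n → Rᵐᵒᵖ)), K.FG →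
    ∀ g : K →ₗ[Rᵐᵒᵖ] M, ∃ h : (Fin n → Rᵐᵒᵖ) →ₗ[Rᵐᵒᵖ] M,
      ∀ (x : Fin n → Rᵐᵒᵖ) (hx : x ∈ K), h x = g ⟨x, hx⟩

variable {ι L : Type} [AddCommGroup L] [Module R L]

lemma rTensorMap_PhiMap {N : Type} [AddCommGroup N] [Module Rᵐᵒᵖ N] (j : M →ₗ[Rᵐᵒᵖ] N)
    (q : (ι →₀ R) →ₗ[R] L) (u : ι →₀ M) :
    rTensorMap R j (PhiMap q u) = PhiMap q (u.mapRange j (map_zero j)) := by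
  have hRHS : (Finsupp.mapRange j (map_zero j) u).sum
        (fun i m => rtmk R m (q (Finsupp.single i 1)))
      = u.sum fun i m => rtmk R (j m) (q (Finsupp.single i 1)) :=
    Finsupp.sum_mapRange_index (fun a => rtmk_zero_left _)
  rw [PhiMap_apply, PhiMap_apply, hRHS, Finsupp.sum, Finsupp.sum, map_sum]
  exact Finset.sum_congr rfl fun i _ => rTensorMap_rtmk j _ _

lemma Wsub_extract (q : (ι →₀ R) →ₗ[R] L) (u : ι →₀ M) (hu : u ∈ Wsub (M := M) q) :
    ∃ l : List (M × (ι →₀ R)), (∀ p ∈ l, q p.2 = 0) ∧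
      u = (l.map fun p => smash p.1 p.2).sum := by
  induction hu using AddSubgroup.closure_induction with
  | mem a ha =>
      obtain ⟨y, w, hw, rfl⟩ := ha
      exact ⟨[(y, w)], by simpa using hw, by simp⟩
  | zero => exact ⟨[], by simp, by simp⟩
  | add a b _ _ ha hb =>
      obtain ⟨la, hla, rfl⟩ := ha
      obtain ⟨lb, hlb, rfl⟩ := hb
      exact ⟨la ++ lb, by
        intro p hp
        rcases List.mem_append.1 hp with h | h
        exacts [hla p h, hlb p h], by simp⟩
  | neg a _ ha =>
      obtain ⟨la, hla, rfl⟩ := ha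
      refine ⟨la.map (fun p => (-p.1, p.2)), ?_, ?_⟩
      · intro p hp
        obtain ⟨p', hp', rfl⟩ := List.mem_map.1 hp
        exact hla p' hp'
      · have : ∀ (l : List (M × (ι →₀ R))),
            ((l.map (fun p => (-p.1, p.2))).map fun p => smash p.1 p.2).sum
              = -((l.map fun p => smash p.1 p.2).sum) := by
          intro l
          induction l with
          | nil => simp
          | cons a t iht =>
              simp only [List.map_cons, List.sum_cons, iht, smash_neg_left]
              abel
        rw [this]

/-- An absolutely pure module is FP-injective. -/
theorem FPInj_of_absolutelyPure (h : AbsolutelyPure R M) : FPInj R M := by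
  classical
  intro n K hK g
  -- embed M into an injective module
  letI : CategoryTheory.EnoughInjectives (ModuleCat Rᵐᵒᵖ) := inferInstance
  let Mobj := ModuleCat.of Rᵐᵒᵖ M
  let Eobj := CategoryTheory.Injective.under Mobj
  let j : M →ₗ[Rᵐᵒᵖ] Eobj := (CategoryTheory.Injective.ι Mobj).hom
  have hj : Function.Injective j :=
    (ModuleCat.mono_iff_injective (CategoryTheory.Injective.ι Mobj)).1 inferInstance
  -- extend g to the injective module
  let gE : ModuleCat.of Rᵐᵒᵖ K ⟶ Eobj := ModuleCat.ofHom (j ∘ₗ g)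
  let sub : ModuleCat.of Rᵐᵒᵖ K ⟶ ModuleCat.of Rᵐᵒᵖ (Fin n → Rᵐᵒᵖ) := ModuleCat.ofHom K.subtype
  haveI : CategoryTheory.Mono sub := (ModuleCat.mono_iff_injective sub).2 Subtype.val_injective
  let hE : (Fin n → Rᵐᵒᵖ) →ₗ[Rᵐᵒᵖ] Eobj := (CategoryTheory.Injective.factorThru gE sub).hom
  have hhE : ∀ (x : Fin n → Rᵐᵒᵖ) (hx : x ∈ K), hE x = j (g ⟨x, hx⟩) := by
    intro x hx
    have := CategoryTheory.Injective.comp_factorThru gE sub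
    exact (congrArg (fun (φ : ModuleCat.of Rᵐᵒᵖ K ⟶ Eobj) => φ.hom ⟨x, hx⟩) this)
  -- generators of K
  obtain ⟨k, v, hv⟩ := Submodule.fg_iff_exists_fin_generating_family.1 hK
  have hvK : ∀ t, v t ∈ K := fun t => hv ▸ Submodule.subset_span (Set.mem_range_self t)
  -- the auxiliary left module
  let wgen : Fin n → (Fin k →₀ R) := fun i =>
    Finsupp.equivFunOnFinite.symm (fun t => unop (v t i))
  let D : Submodule R (Fin k →₀ R) := Submodule.span R (Set.range wgen)
  let q : (Fin k →₀ R) →ₗ[R] ((Fin k →₀ R) ⧸ D) := D.mkQ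
  have hq : Function.Surjective q := Submodule.mkQ_surjective D
  have hkerq : ∀ w, q w = 0 ↔ w ∈ D := fun w => Submodule.Quotient.mk_eq_zero D
  -- the element u_M
  let uM : Fin k →₀ M := Finsupp.equivFunOnFinite.symm (fun t => g ⟨v t, hvK t⟩)
  -- uM maps to a sum of trivial relations in E
  have huE : Finsupp.mapRange j (map_zero j) uM = ∑ i, smash (hE (Pi.single i 1)) (wgen i) := by
    ext t
    rw [Finsupp.mapRange_apply]
    have h1 : (uM : Fin k →₀ M) t = g ⟨v t, hvK t⟩ := rfl
    have hps : ∀ i : Fin n, (fun j' => if i = j' then (1 : Rᵐᵒᵖ) else 0) = Pi.single i 1 := by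
      intro i
      funext s
      simp [Pi.single_apply, eq_comm]
    rw [h1, ← hhE (v t) (hvK t), LinearMap.pi_apply_eq_sum_univ hE (v t)]
    rw [Finset.sum_apply' t]
    refine Finset.sum_congr rfl fun i _ => ?_
    rw [smash_apply]
    have hw : wgen i t = unop (v t i) := rfl
    rw [hw, op_unop, hps i]
  have hE0 : PhiMap q (Finsupp.mapRange j (map_zero j) uM) = 0 := by
    rw [huE, map_sum]
    refine Finset.sum_eq_zero fun i _ => ?_
    exact PhiMap_smash q _ _ ((hkerq _).2 (Submodule.subset_span (Set.mem_range_self i)))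
  -- purity
  have hpure := h Eobj j hj ((Fin k →₀ R) ⧸ D)
  have h0 : PhiMap q uM = 0 := by
    apply hpure
    rw [rTensorMap_PhiMap, hE0, map_zero]
  have huW : uM ∈ Wsub (M := M) q := mem_Wsub_of_PhiMap_eq_zero q hq uM h0
  -- extract a solution
  have hQ : ∃ z : Fin n → M, ∀ t, uM t = ∑ i, (v t i) • z i := by
    obtain ⟨l, hl, hsum⟩ := Wsub_extract q uM huW
    -- prove the property for each list and conclude
    suffices H : ∀ l' : List (M × (Fin k →₀ R)), (∀ p ∈ l', q p.2 = 0) →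
        ∃ z : Fin n → M, ∀ t, ((l'.map fun p => smash p.1 p.2).sum : Fin k →₀ M) t
          = ∑ i, (v t i) • z i by
      obtain ⟨z, hz⟩ := H l hl
      exact ⟨z, fun t => by rw [hsum]; exact hz t⟩
    intro l'
    induction l' with
    | nil => exact fun _ => ⟨0, fun t => by simp⟩
    | cons p l'' ih =>
        intro hmem
        obtain ⟨z, hz⟩ := ih (fun p hp => hmem p (List.mem_cons_of_mem _ hp))
        have hp0 : p.2 ∈ D := (hkerq p.2).1 (hmem p List.mem_cons_self)
        -- single smash term
        have hone : ∃ z' : Fin n → M, ∀ t, smash p.1 p.2 t = ∑ i, (v t i) • z' i := by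
          have : ∀ w ∈ D, ∀ y : M, ∃ z' : Fin n → M,
              ∀ t, smash y w t = ∑ i, (v t i) • z' i := by
            intro w hw
            induction hw using Submodule.span_induction with
            | mem x hx =>
                obtain ⟨i0, rfl⟩ := hx
                intro y
                refine ⟨Pi.single i0 y, fun t => ?_⟩
                rw [smash_apply]
                have : wgen i0 t = unop (v t i0) := rfl
                rw [this, op_unop, Finset.sum_eq_single i0
                  (fun i _ hi => by simp [Pi.single_apply, hi]) (by simp)]
                simp
            | zero => exact fun y => ⟨0, fun t => by simp [smash]⟩
            | add x x' hx hx' ihx ihx' =>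
                intro y
                obtain ⟨z1, hz1⟩ := ihx y
                obtain ⟨z2, hz2⟩ := ihx' y
                refine ⟨z1 + z2, fun t => ?_⟩
                rw [smash_add_right]
                simp only [Finsupp.add_apply, hz1 t, hz2 t, Pi.add_apply, smul_add]
                rw [← Finset.sum_add_distrib]
            | smul c x hx ihx =>
                intro y
                obtain ⟨z1, hz1⟩ := ihx (op c • y)
                exact ⟨z1, fun t => by rw [← smash_smul]; exact hz1 t⟩
          exact this p.2 hp0 p.1
        obtain ⟨z', hz'⟩ := hone
        refine ⟨z' + z, fun t => ?_⟩
        simp only [List.map_cons, List.sum_cons, Finsupp.add_apply, hz' t, hz t,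
          Pi.add_apply, smul_add]
        rw [← Finset.sum_add_distrib]
  obtain ⟨z, hz⟩ := hQ
  -- the extension
  refine ⟨piMap z, ?_⟩
  have key : ∀ t, piMap z (v t) = g ⟨v t, hvK t⟩ := by
    intro t
    rw [piMap_apply]
    exact (hz t).symm
  intro x hx
  have hx' : x ∈ Submodule.span Rᵐᵒᵖ (Set.range v) := hv.symm ▸ hx
  revert hx
  induction hx' using Submodule.span_induction with
  | mem x hxx =>
      intro hK
      obtain ⟨t, rfl⟩ := hxx
      exact key t
  | zero =>
      intro hK
      rw [map_zero]
      exact ((congrArg g (Subtype.ext rfl)).trans (map_zero g)).symm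
  | add x y hxm hym ihx ihy =>
      intro hK
      rw [map_add, ihx (hv ▸ hxm), ihy (hv ▸ hym), ← map_add]
      exact congrArg g (Subtype.ext rfl)
  | smul c x hxm ihx =>
      intro hK
      rw [map_smul, ihx (hv ▸ hxm), ← map_smul]
      exact congrArg g (Subtype.ext rfl)

end Purity

section FPInjToPure

variable {R : Type} [Ring R] {M : Type} [AddCommGroup M] [Module Rᵐᵒᵖ M]

lemma list_map_sum_eq {α A : Type} [AddCommMonoid A] (l : List α) (g : α → A) :
    (l.map g).sum = ∑ s : Fin l.length, g (l.get s) := by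
  induction l with
  | nil => simp
  | cons a t ih =>
      have hsucc : ∑ s : Fin (a :: t).length, g ((a :: t).get s)
          = g a + ∑ s : Fin t.length, g (t.get s) := Fin.sum_univ_succ _
      rw [List.map_cons, List.sum_cons, ih, hsucc]

theorem absolutelyPure_of_FPInj (hM : FPInj R M) : AbsolutelyPure R M := by
  classical
  intro N _ _ j hj L _ _
  rw [injective_iff_map_eq_zero]
  intro x hx
  obtain ⟨lx, rfl⟩ := rtensor_exists_list x
  set q := Finsupp.linearCombination R (id : L → L) with hqdef
  have hq : Function.Surjective q := fun l => ⟨Finsupp.single l 1, by simp [hqdef]⟩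
  set u : L →₀ M := (lx.map fun p => Finsupp.single p.2 p.1).sum with hudef
  have hPhi : PhiMap (M := M) q u = (lx.map (fun p => rtmk R p.1 p.2)).sum := by
    rw [hudef, map_list_sum, List.map_map]
    congr 1
    refine List.map_congr_left fun p _ => ?_
    show PhiMap q (Finsupp.single p.2 p.1) = rtmk R p.1 p.2
    rw [PhiMap_single]
    congr 1
    simp [hqdef]
  have hxN : PhiMap (M := N) q (u.mapRange j (map_zero j)) = 0 := by
    rw [← rTensorMap_PhiMap, hPhi, hx]
  have hW := mem_Wsub_of_PhiMap_eq_zero q hq _ hxN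
  obtain ⟨lw, hlw, hlsum⟩ := Wsub_extract q _ hW
  set k := lw.length with hkdef
  set y : Fin k → N := fun s => (lw.get s).1 with hydef
  set w : Fin k → (L →₀ R) := fun s => (lw.get s).2 with hwdef
  have hw0 : ∀ s, q (w s) = 0 := fun s => hlw _ (List.get_mem lw s)
  have hlsum' : Finsupp.mapRange j (map_zero j) u = ∑ s : Fin k, smash (y s) (w s) := by
    rw [hlsum, list_map_sum_eq]
  have hrep : ∀ l : L, j (u l) = ∑ s, op ((w s) l) • (y s) := by
    intro l
    have h1 : (Finsupp.mapRange j (map_zero j) u) l = j (u l) := Finsupp.mapRange_apply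
    rw [← h1, hlsum', Finset.sum_apply' l]
    exact Finset.sum_congr rfl fun s _ => smash_apply (y s) (w s) l
  -- the finitely generated submodule
  set supp : Finset L := u.support ∪ Finset.univ.biUnion (fun s : Fin k => (w s).support)
    with hsuppdef
  set c : L → (Fin k → Rᵐᵒᵖ) := fun l s => op ((w s) l) with hcdef
  set KK : Submodule Rᵐᵒᵖ (Fin k → Rᵐᵒᵖ) := Submodule.span Rᵐᵒᵖ (c '' ↑supp) with hKKdef
  have hKKfg : KK.FG := Submodule.fg_span ((supp : Set L).toFinite.image c)
  have hcK : ∀ l, c l ∈ KK := by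
    intro l
    by_cases hl : l ∈ supp
    · exact Submodule.subset_span ⟨l, hl, rfl⟩
    · have : c l = 0 := by
        funext s
        have : l ∉ (w s).support := fun hls => hl (Finset.mem_union_right _
          (Finset.mem_biUnion.2 ⟨s, Finset.mem_univ s, hls⟩))
        rw [hcdef]
        simp [Finsupp.notMem_support_iff.1 this]
      rw [this]
      exact Submodule.zero_mem KK
  set φ : (Fin k → Rᵐᵒᵖ) →ₗ[Rᵐᵒᵖ] N := piMap y with hφdef
  have hφc : ∀ l, φ (c l) = j (u l) := fun l => (hrep l).symm
  have hsub : ∀ x' ∈ KK, φ x' ∈ LinearMap.range j := by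
    intro x' hx'
    have : KK ≤ Submodule.comap φ (LinearMap.range j) := by
      rw [hKKdef, Submodule.span_le]
      rintro _ ⟨l, _, rfl⟩
      exact ⟨u l, (hφc l).symm⟩
    exact this hx'
  let e := LinearEquiv.ofInjective j hj
  let φK : KK →ₗ[Rᵐᵒᵖ] (LinearMap.range j) :=
    (φ ∘ₗ KK.subtype).codRestrict _ (fun x' => hsub x'.1 x'.2)
  let g : KK →ₗ[Rᵐᵒᵖ] M := e.symm.toLinearMap ∘ₗ φK
  have hg : ∀ (x') (hx' : x' ∈ KK), j (g ⟨x', hx'⟩) = φ x' := by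
    intro x' hx'
    show j (e.symm (φK ⟨x', hx'⟩)) = φ x'
    have h2 : j (e.symm (φK ⟨x', hx'⟩)) = ((e (e.symm (φK ⟨x', hx'⟩)) : LinearMap.range j) : N) := by
      rw [LinearEquiv.ofInjective_apply]
    rw [h2, e.apply_symm_apply]
    rfl
  obtain ⟨h, hh⟩ := hM k KK hKKfg g
  set z : Fin k → M := fun s => h (Pi.single s 1) with hzdef
  have hps : ∀ s : Fin k, (fun t => if s = t then (1 : Rᵐᵒᵖ) else 0) = Pi.single s 1 := by
    intro s
    funext t
    simp [Pi.single_apply, eq_comm]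
  have hcl : ∀ l, u l = ∑ s, op ((w s) l) • z s := by
    intro l
    have h3 : j (u l) = j (∑ s, op ((w s) l) • z s) := by
      rw [← hφc l, ← hg (c l) (hcK l), ← hh (c l) (hcK l),
        LinearMap.pi_apply_eq_sum_univ h (c l)]
      refine congrArg j (Finset.sum_congr rfl fun s _ => ?_)
      rw [hps s]
    exact hj h3
  have huW : u ∈ Wsub (M := M) q := by
    have : u = ∑ s, smash (z s) (w s) := by
      ext l
      rw [hcl l, Finset.sum_apply' l]
      exact Finset.sum_congr rfl fun s _ => (smash_apply (z s) (w s) l).symm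
    rw [this]
    exact AddSubgroup.sum_mem _ fun s _ =>
      AddSubgroup.subset_closure ⟨z s, w s, hw0 s, rfl⟩
  rw [← hPhi]
  exact PhiMap_mem_Wsub q u huW

end FPInjToPure

/-! ### A projective resolution from a finite presentation -/

section Resolution

open CategoryTheory CategoryTheory.Limits

variable {R : Type} [Ring R] {F : Type} [AddCommGroup F] [Module Rᵐᵒᵖ F] {n k : ℕ}

instance modPiProjective (m : ℕ) : Projective (ModuleCat.of Rᵐᵒᵖ (Fin m → Rᵐᵒᵖ)) :=
  (IsProjective.iff_projective (P := (Fin m → Rᵐᵒᵖ))).mp inferInstance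

/-- The chain complex underlying the resolution built from a presentation. -/
noncomputable def resCx (v : Fin k → (Fin n → Rᵐᵒᵖ)) : ChainComplex (ModuleCat Rᵐᵒᵖ) ℕ :=
  ChainComplex.mk' (ModuleCat.of Rᵐᵒᵖ (Fin n → Rᵐᵒᵖ)) (ModuleCat.of Rᵐᵒᵖ (Fin k → Rᵐᵒᵖ))
    (ModuleCat.ofHom (piMap v)) (fun f => ⟨_, Projective.d f, (Category.assoc _ _ _).trans ((congrArg _ (kernel.condition f)).trans comp_zero)⟩)

lemma resCx_d_1_0 (v : Fin k → (Fin n → Rᵐᵒᵖ)) :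
    (resCx v).d 1 0 = ModuleCat.ofHom (piMap v) := by
  simp [resCx]

lemma resCx_d_succ (v : Fin k → (Fin n → Rᵐᵒᵖ)) (m : ℕ) :
    ∃ (e : (resCx v).X (m+3) ≅ Projective.syzygies ((resCx v).d (m+2) (m+1))),
      (resCx v).d (m+3) (m+2) = e.hom ≫ Projective.d ((resCx v).d (m+2) (m+1)) :=
  ⟨ChainComplex.mkXIso _ _ _ _ _ _ _ m, ChainComplex.mk_d _ _ _ _ _ _ _ m⟩

lemma resCx_exactAt_succ (v : Fin k → (Fin n → Rᵐᵒᵖ)) (m : ℕ) :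
    (resCx v).ExactAt (m + 1) := by
  match m with
  | 0 =>
    rw [HomologicalComplex.exactAt_iff' _ (0 + 1 + 1) (0 + 1) 0 (by simp) (by simp)]
    dsimp [resCx, HomologicalComplex.sc', HomologicalComplex.shortComplexFunctor',
        ChainComplex.mk', ChainComplex.mk]
    apply exact_d_f
  | m + 1 =>
    rw [HomologicalComplex.exactAt_iff' _ (m + 1 + 1 + 1) (m + 1 + 1) (m + 1) (by simp) (by simp),
      ShortComplex.moduleCat_exact_iff]
    dsimp only [HomologicalComplex.sc', HomologicalComplex.shortComplexFunctor']
    intro x hx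
    obtain ⟨e, he⟩ := resCx_d_succ v m
    have hex := exact_d_f ((resCx v).d (m + 2) (m + 1))
    rw [ShortComplex.moduleCat_exact_iff] at hex
    obtain ⟨y, hy⟩ := hex x hx
    refine ⟨e.inv y, ?_⟩
    rw [he]
    exact (congrArg (fun z => Projective.d ((resCx v).d (m + 2) (m + 1)) z)
      (Iso.inv_hom_id_apply e y)).trans hy

instance resCx_X_projective (v : Fin k → (Fin n → Rᵐᵒᵖ)) (m : ℕ) :
    Projective ((resCx v).X m) := by
  obtain (_ | _ | _ | m) := m
  · exact modPiProjective n
  · exact modPiProjective k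
  · apply Projective.projective_over
  · apply Projective.projective_over

variable (p : (Fin n → Rᵐᵒᵖ) →ₗ[Rᵐᵒᵖ] F)
  (v : Fin k → (Fin n → Rᵐᵒᵖ))

lemma piMap_mem_ker (hv : Submodule.span Rᵐᵒᵖ (Set.range v) = LinearMap.ker p)
    (x : Fin k → Rᵐᵒᵖ) : p (piMap v x) = 0 := by
  have : piMap v x ∈ LinearMap.ker p := by
    rw [← hv, ← range_piMap]
    exact ⟨x, rfl⟩
  exact this

/-- The projective resolution built from a presentation. -/
noncomputable def presResolution (hp : Function.Surjective p)
    (hv : Submodule.span Rᵐᵒᵖ (Set.range v) = LinearMap.ker p) :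
    ProjectiveResolution (ModuleCat.of Rᵐᵒᵖ F) where
  complex := resCx v
  π := (ChainComplex.toSingle₀Equiv _ _).symm ⟨ModuleCat.ofHom p, by
        rw [resCx_d_1_0]
        refine ModuleCat.hom_ext (LinearMap.ext fun x => ?_)
        exact piMap_mem_ker p v hv x⟩
  quasiIso := ⟨fun m => by
    have hepi : Epi (ModuleCat.ofHom p) := (ModuleCat.epi_iff_surjective _).2 hp
    have hex : (ShortComplex.mk (ModuleCat.ofHom (piMap v)) (ModuleCat.ofHom p)
        (ModuleCat.hom_ext (LinearMap.ext fun x => piMap_mem_ker p v hv x))).Exact := by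
      rw [ShortComplex.moduleCat_exact_iff]
      intro x hx
      have : x ∈ LinearMap.ker p := hx
      rw [← hv, ← range_piMap] at this
      exact this
    cases m
    · rw [ChainComplex.quasiIsoAt₀_iff, ShortComplex.quasiIso_iff_of_zeros']
      · refine (ShortComplex.exact_and_epi_g_iff_of_iso ?_).2 ⟨hex, hepi⟩
        exact ShortComplex.isoMk (Iso.refl _) (Iso.refl _) (Iso.refl _)
          (by rfl) (by rfl)
      all_goals rfl
    · rw [quasiIsoAt_iff_exactAt']
      · apply resCx_exactAt_succ
      · apply ChainComplex.exactAt_succ_single_obj⟩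

end Resolution

/-! ### `Ext¹` vanishing via the presentation resolution -/

section ExtChar

open CategoryTheory CategoryTheory.Limits

variable {R : Type} [Ring R] (M : Type) [AddCommGroup M] [Module Rᵐᵒᵖ M]
variable {F : Type} [AddCommGroup F] [Module Rᵐᵒᵖ F] {n k : ℕ}

lemma subsingleton_iff_of_iso {X Y : ModuleCat ℤ} (e : X ≅ Y) :
    Subsingleton X ↔ Subsingleton Y :=
  Equiv.subsingleton_congr ((forget _).mapIso e).toEquiv

lemma moduleCat_isZero_iff (X : ModuleCat ℤ) : IsZero X ↔ Subsingleton X := by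
  constructor
  · intro h
    have h1 : (𝟙 X : X ⟶ X) = 0 := h.eq_of_src _ _
    refine ⟨fun a b => ?_⟩
    have ha : a = (0 : X ⟶ X) a := by rw [← h1]; rfl
    have hb : b = (0 : X ⟶ X) b := by rw [← h1]; rfl
    rw [ha, hb]
    rfl
  · intro h
    exact ModuleCat.isZero_of_subsingleton X

lemma ext_iff_phiProp (p : (Fin n → Rᵐᵒᵖ) →ₗ[Rᵐᵒᵖ] F) (v : Fin k → (Fin n → Rᵐᵒᵖ))
    (hp : Function.Surjective p)
    (hv : Submodule.span Rᵐᵒᵖ (Set.range v) = LinearMap.ker p) :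
    Subsingleton (((_root_.Ext ℤ (ModuleCat Rᵐᵒᵖ) 1).obj
        (Opposite.op (ModuleCat.of Rᵐᵒᵖ F))).obj (ModuleCat.of Rᵐᵒᵖ M)) ↔
      ∀ φ : (Fin k → Rᵐᵒᵖ) →ₗ[Rᵐᵒᵖ] M, (∀ x ∈ LinearMap.ker (piMap v), φ x = 0) →
        ∃ ψ : (Fin n → Rᵐᵒᵖ) →ₗ[Rᵐᵒᵖ] M, ψ ∘ₗ (piMap v) = φ := by
  classical
  set Mob := ModuleCat.of Rᵐᵒᵖ M with hMob
  set P := presResolution p v hp hv with hP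
  rw [subsingleton_iff_of_iso (P.isoExt 1 Mob), ← moduleCat_isZero_iff,
    ← HomologicalComplex.exactAt_iff_isZero_homology,
    HomologicalComplex.exactAt_iff' _ 0 1 2 (by simp) (by simp),
    ShortComplex.moduleCat_exact_iff]
  have hPc : P.complex = resCx v := rfl
  -- exactness of the resolution at 1, elementwise
  have exact1 := resCx_exactAt_succ v 0
  rw [HomologicalComplex.exactAt_iff' _ 2 1 0 (by simp) (by simp),
    ShortComplex.moduleCat_exact_iff] at exact1
  dsimp only [HomologicalComplex.sc', HomologicalComplex.shortComplexFunctor'] at exact1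
  -- the complex condition
  have hdd : ∀ y, (resCx v).d 1 0 ((resCx v).d 2 1 y) = 0 := by
    intro y
    have := (resCx v).d_comp_d 2 1 0
    calc (resCx v).d 1 0 ((resCx v).d 2 1 y)
        = ((resCx v).d 2 1 ≫ (resCx v).d 1 0) y := rfl
      _ = (0 : (resCx v).X 2 ⟶ (resCx v).X 0) y := by rw [this]
      _ = 0 := rfl
  constructor
  · intro H φ hφ
    -- regard φ as an element of the Hom module
    have hcond : ((P.complex.linearYonedaObj ℤ Mob).sc' 0 1 2).g
        (show ((P.complex.linearYonedaObj ℤ Mob).sc' 0 1 2).X₂ from ModuleCat.ofHom φ) = 0 := by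
      show (resCx v).d 2 1 ≫ (show (resCx v).X 1 ⟶ Mob from ModuleCat.ofHom φ) = 0
      refine ModuleCat.hom_ext (LinearMap.ext ?_)
      intro y
      show φ ((resCx v).d 2 1 y) = 0
      apply hφ
      show piMap v ((resCx v).d 2 1 y) = 0
      have := hdd y
      rw [resCx_d_1_0] at this
      exact this
    obtain ⟨ψ, hψ⟩ := H _ hcond
    refine ⟨ModuleCat.Hom.hom (show (resCx v).X 0 ⟶ Mob from ψ), ?_⟩
    have : (resCx v).d 1 0 ≫ (show (resCx v).X 0 ⟶ Mob from ψ) = ModuleCat.ofHom φ := hψ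
    rw [resCx_d_1_0] at this
    exact congrArg ModuleCat.Hom.hom this
  · intro H x2 hx2
    -- x2 is a linear map φ
    let φ : (Fin k → Rᵐᵒᵖ) →ₗ[Rᵐᵒᵖ] M := ModuleCat.Hom.hom (show (resCx v).X 1 ⟶ Mob from x2)
    have hφ : ∀ x ∈ LinearMap.ker (piMap v), φ x = 0 := by
      intro x hx
      have hx' : (resCx v).d 1 0 x = 0 := by
        rw [resCx_d_1_0]
        exact hx
      obtain ⟨y, hy⟩ := exact1 x hx'
      have hcomp : ((resCx v).d 2 1 ≫ (show (resCx v).X 1 ⟶ Mob from ModuleCat.ofHom φ)) = 0 := hx2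
      calc φ x = φ ((resCx v).d 2 1 y) := (congrArg φ hy).symm
        _ = ((resCx v).d 2 1 ≫ (show (resCx v).X 1 ⟶ Mob from ModuleCat.ofHom φ)) y := rfl
        _ = (0 : (resCx v).X 2 ⟶ Mob) y := by rw [hcomp]
        _ = 0 := rfl
    obtain ⟨ψ, hψ⟩ := H φ hφ
    refine ⟨show (resCx v).X 0 ⟶ Mob from ModuleCat.ofHom ψ, ?_⟩
    show (resCx v).d 1 0 ≫ (show (resCx v).X 0 ⟶ Mob from ModuleCat.ofHom ψ) = x2
    rw [resCx_d_1_0]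
    exact ModuleCat.hom_ext hψ

end ExtChar

section PhiToExt

variable {R : Type} [Ring R] {M : Type} [AddCommGroup M] [Module Rᵐᵒᵖ M]
variable {F : Type} [AddCommGroup F] [Module Rᵐᵒᵖ F] {n k : ℕ}

lemma phiProp_iff_extProp (p : (Fin n → Rᵐᵒᵖ) →ₗ[Rᵐᵒᵖ] F) (v : Fin k → (Fin n → Rᵐᵒᵖ))
    (hv : Submodule.span Rᵐᵒᵖ (Set.range v) = LinearMap.ker p) :
    (∀ φ : (Fin k → Rᵐᵒᵖ) →ₗ[Rᵐᵒᵖ] M, (∀ x ∈ LinearMap.ker (piMap v), φ x = 0) →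
        ∃ ψ : (Fin n → Rᵐᵒᵖ) →ₗ[Rᵐᵒᵖ] M, ψ ∘ₗ (piMap v) = φ) ↔
      (∀ g : (LinearMap.ker p) →ₗ[Rᵐᵒᵖ] M, ∃ h : (Fin n → Rᵐᵒᵖ) →ₗ[Rᵐᵒᵖ] M,
        ∀ (x : Fin n → Rᵐᵒᵖ) (hx : x ∈ LinearMap.ker p), h x = g ⟨x, hx⟩) := by
  have hrange : LinearMap.range (piMap v) = LinearMap.ker p := by rw [range_piMap, hv]
  constructor
  · intro H g
    let d1c : (Fin k → Rᵐᵒᵖ) →ₗ[Rᵐᵒᵖ] (LinearMap.ker p) :=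
      (piMap v).codRestrict (LinearMap.ker p)
        (fun a => hrange ▸ LinearMap.mem_range_self _ a)
    obtain ⟨ψ, hψ⟩ := H (g ∘ₗ d1c) (fun x hx => by
      have hz : d1c x = 0 := by
        apply Subtype.ext
        show piMap v x = _
        simpa using hx
      show g (d1c x) = 0
      rw [hz, map_zero])
    refine ⟨ψ, fun x hx => ?_⟩
    obtain ⟨a, ha⟩ : ∃ a, piMap v a = x := by rw [← hrange] at hx; exact hx
    have h1 : ψ (piMap v a) = g (d1c a) := congrArg (fun f : _ →ₗ[Rᵐᵒᵖ] M => f a) hψ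
    have h2 : d1c a = ⟨x, hx⟩ := Subtype.ext ha
    rw [← h2, ← h1, ha]
  · intro H φ hφ
    let e := LinearMap.quotKerEquivRange (piMap (R := R) v)
    let g0 : ((Fin k → Rᵐᵒᵖ) ⧸ LinearMap.ker (piMap (R := R) v)) →ₗ[Rᵐᵒᵖ] M :=
      Submodule.liftQ _ φ (fun x hx => hφ x hx)
    let g : (LinearMap.ker p) →ₗ[Rᵐᵒᵖ] M :=
      g0 ∘ₗ (e.symm.toLinearMap ∘ₗ (LinearEquiv.ofEq _ _ hrange.symm).toLinearMap)
    obtain ⟨h, hh⟩ := H g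
    refine ⟨h, ?_⟩
    apply LinearMap.ext
    intro a
    show h (piMap v a) = φ a
    have hmem : piMap v a ∈ LinearMap.ker p := hrange ▸ LinearMap.mem_range_self _ a
    rw [hh _ hmem]
    show g0 (e.symm ((LinearEquiv.ofEq _ _ hrange.symm) ⟨piMap v a, hmem⟩)) = φ a
    have h2 : (LinearEquiv.ofEq _ _ hrange.symm) ⟨piMap v a, hmem⟩
        = ⟨piMap v a, LinearMap.mem_range_self _ a⟩ := rfl
    have h3 : e.symm ⟨piMap v a, LinearMap.mem_range_self _ a⟩
        = Submodule.Quotient.mk a := by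
      apply e.injective
      rw [e.apply_symm_apply]
      apply Subtype.ext
      exact (LinearMap.quotKerEquivRange_apply_mk _ _).symm
    rw [h2, h3]
    exact Submodule.liftQ_apply _ φ a

end PhiToExt

open CategoryTheory in
theorem absolutelyPure_iff_ext_vanishes' (R : Type) [Ring R]
    (M : Type) [AddCommGroup M] [Module Rᵐᵒᵖ M] :
    AbsolutelyPure R M ↔
      ∀ (F : Type) [AddCommGroup F] [Module Rᵐᵒᵖ F], Module.FinitePresentation Rᵐᵒᵖ F →
        Subsingleton (((_root_.Ext ℤ (ModuleCat Rᵐᵒᵖ) 1).obj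
          (Opposite.op (ModuleCat.of Rᵐᵒᵖ F))).obj (ModuleCat.of Rᵐᵒᵖ M)) := by
  constructor
  · intro h F _ _ hFP
    have hFPInj := FPInj_of_absolutelyPure h
    haveI := hFP
    obtain ⟨n', p, hp⟩ := Module.Finite.exists_fin' Rᵐᵒᵖ F
    have hker : (LinearMap.ker p).FG := Module.FinitePresentation.fg_ker p hp
    obtain ⟨k', v, hv⟩ := Submodule.fg_iff_exists_fin_generating_family.1 hker
    rw [ext_iff_phiProp M p v hp hv, phiProp_iff_extProp p v hv]
    intro g
    exact hFPInj n' (LinearMap.ker p) hker g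
  · intro H
    apply absolutelyPure_of_FPInj
    intro n K hK g
    haveI hFP : Module.FinitePresentation Rᵐᵒᵖ ((Fin n → Rᵐᵒᵖ) ⧸ K) :=
      Module.finitePresentation_of_surjective K.mkQ (Submodule.mkQ_surjective K)
        (by rwa [Submodule.ker_mkQ])
    have hsub := H ((Fin n → Rᵐᵒᵖ) ⧸ K) hFP
    obtain ⟨k', v, hv⟩ := Submodule.fg_iff_exists_fin_generating_family.1 hK
    have hv' : Submodule.span Rᵐᵒᵖ (Set.range v) = LinearMap.ker K.mkQ := by
      rw [Submodule.ker_mkQ]; exact hv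
    rw [ext_iff_phiProp M K.mkQ v (Submodule.mkQ_surjective K) hv',
      phiProp_iff_extProp K.mkQ v hv'] at hsub
    obtain ⟨h, hh⟩ := hsub (g ∘ₗ (LinearEquiv.ofEq _ _ (Submodule.ker_mkQ K)).toLinearMap)
    refine ⟨h, fun x hx => ?_⟩
    have hx' : x ∈ LinearMap.ker K.mkQ := by rwa [Submodule.ker_mkQ]
    rw [hh x hx']
    rfl

open CategoryTheory in
/-- A right `R`-module `M` is absolutely pure iff `Ext¹(F, M) = 0` for every finitely
presented right `R`-module `F`. -/
theorem absolutelyPure_iff_ext_vanishes (R : Type) [Ring R]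
    (M : Type) [AddCommGroup M] [Module Rᵐᵒᵖ M] :
    AbsolutelyPure R M ↔
      ∀ (F : Type) [AddCommGroup F] [Module Rᵐᵒᵖ F], Module.FinitePresentation Rᵐᵒᵖ F →
        Subsingleton (((_root_.Ext ℤ (ModuleCat Rᵐᵒᵖ) 1).obj
          (Opposite.op (ModuleCat.of Rᵐᵒᵖ F))).obj (ModuleCat.of Rᵐᵒᵖ M)) := by
  exact absolutelyPure_iff_ext_vanishes' R M
end
end
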